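/- arXiv:2309.11110 — 3 statements merged into one kernel-verified Lean document; each statement's English description precedes it below -/
import Mathlib

section
/- Let h : ℝ² → ℝ satisfy the symmetry h(x,y)=h(y,x) and the strict monotone condition (h3): ξ₁<ξ₂ and η₁<η₂ imply h(ξ₁,η₁)+h(ξ₂,η₂) < h(ξ₁,η₂)+h(ξ₂,η₁). Let x = (x_i)_{i=0}^n be a finite configuration with x_{m-1} < x_{m+2} and x_m > x_{m+1} for some m with 1 ≤ m ≤ n-2. Then x is not minimal: there exists a configuration y with the same endpoints y_{m-1}=x_{m-1}, y_{m+2}=x_{m+2} such that the total action h(y_{m-1},y_m)+h(y_m,y_{m+1})+h(y_{m+1},y_{m+2}) is strictly smaller than h(x_{m-1},x_m)+h(x_m,x_{m+1})+h(x_{m+1},x_{m+2}). -/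
/-- Almost-monotonicity: if `x_{m-1} < x_{m+2}` and `x_m > x_{m+1}`, then the
configuration is not minimal: some configuration with the same endpoints has
strictly smaller three-step action. -/
theorem not_minimal_of_nonmonotone
    (h : ℝ → ℝ → ℝ)
    (hcont : Continuous fun p : ℝ × ℝ => h p.1 p.2)
    (hsym : ∀ x y : ℝ, h x y = h y x)
    (h3 : ∀ ξ₁ ξ₂ η₁ η₂ : ℝ, ξ₁ < ξ₂ → η₁ < η₂ →
      h ξ₁ η₁ + h ξ₂ η₂ < h ξ₁ η₂ + h ξ₂ η₁)
    (n m : ℕ) (x : ℕ → ℝ)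
    (hm1 : 1 ≤ m) (hm2 : m + 2 ≤ n)
    (hlt : x (m - 1) < x (m + 2)) (hgt : x (m + 1) < x m) :
    ∃ y : ℕ → ℝ, y (m - 1) = x (m - 1) ∧ y (m + 2) = x (m + 2) ∧
      h (y (m - 1)) (y m) + h (y m) (y (m + 1)) + h (y (m + 1)) (y (m + 2)) <
      h (x (m - 1)) (x m) + h (x m) (x (m + 1)) + h (x (m + 1)) (x (m + 2)) := by
  refine ⟨fun i => if i = m then x (m+1) else if i = m+1 then x m else x i, ?_, ?_, ?_⟩
  · have h1 : m - 1 ≠ m := by omega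
    have h2 : m - 1 ≠ m + 1 := by omega
    simp [h1, h2]
  · simp
  · have h1 : m - 1 ≠ m := by omega
    have h2 : m - 1 ≠ m + 1 := by omega
    simp only [if_pos rfl, h1, h2, if_neg, if_false, Nat.succ_ne_self,
      (by omega : m + 1 ≠ m), (by omega : m + 2 ≠ m), (by omega : m + 2 ≠ m + 1),
      ite_false, ite_true, if_true]
    rw [if_neg (show m + 2 ≠ m by omega)]
    have key := h3 (x (m+1)) (x m) (x (m-1)) (x (m+2)) hgt hlt
    have e1 : h (x (m-1)) (x (m+1)) = h (x (m+1)) (x (m-1)) := hsym _ _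
    have e2 : h (x (m+1)) (x m) = h (x m) (x (m+1)) := hsym _ _
    have e3 : h (x (m-1)) (x m) = h (x m) (x (m-1)) := hsym _ _
    linarith
end

section
/- Suppose h is Lipschitz in each variable with constant C on [u⁰,u¹]², c = h(u⁰,u⁰), and a_i(x) = h(x_i,x_{i+1}) − c. Let x = (x_i)_{i=0}^n with x_i ∈ [u⁰,u¹], x_0 = a, x_n = b, a,b ∈ [u⁰,u⁰+r] achieve the minimum C(n;a,b) of the action among such configurations. Then Σ_{i=0}^{n-1} a_i(x) ≤ C(|a−u⁰| + |b−u⁰|), via comparison with the configuration y given by y_0=a, y_n=b, y_i=u⁰ otherwise. -/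
/-- Upper bound for the renormalized action of a minimizer with endpoints near `u⁰`:
comparison with the configuration that equals `u⁰` except at the endpoints gives
`Σ a_i(x) ≤ C(|a − u⁰| + |b − u⁰|)`. -/
theorem minimizer_action_upper_bound
    (h : ℝ → ℝ → ℝ) (u0 u1 C r : ℝ) (hu : u0 < u1) (hC : 0 < C)
    (hlip1 : ∀ ξ η₁ η₂ : ℝ, ξ ∈ Set.Icc u0 u1 → η₁ ∈ Set.Icc u0 u1 →
      η₂ ∈ Set.Icc u0 u1 → |h ξ η₁ - h ξ η₂| ≤ C * |η₁ - η₂|)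
    (hlip2 : ∀ ξ₁ ξ₂ η : ℝ, ξ₁ ∈ Set.Icc u0 u1 → ξ₂ ∈ Set.Icc u0 u1 →
      η ∈ Set.Icc u0 u1 → |h ξ₁ η - h ξ₂ η| ≤ C * |ξ₁ - ξ₂|)
    (c : ℝ) (hc : c = h u0 u0)
    (n : ℕ) (hn : 1 ≤ n)
    (a b : ℝ) (ha : a ∈ Set.Icc u0 (u0 + r)) (hb : b ∈ Set.Icc u0 (u0 + r))
    (ha' : a ∈ Set.Icc u0 u1) (hb' : b ∈ Set.Icc u0 u1)
    (x : ℕ → ℝ) (hx : ∀ i ≤ n, x i ∈ Set.Icc u0 u1)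
    (hx0 : x 0 = a) (hxn : x n = b)
    (hmin : ∀ y : ℕ → ℝ, (∀ i ≤ n, y i ∈ Set.Icc u0 u1) → y 0 = a → y n = b →
      ∑ i ∈ Finset.range n, h (x i) (x (i + 1)) ≤
      ∑ i ∈ Finset.range n, h (y i) (y (i + 1))) :
    ∑ i ∈ Finset.range n, (h (x i) (x (i + 1)) - c) ≤
      C * (|a - u0| + |b - u0|) := by
  set y : ℕ → ℝ := fun i => if i = 0 then a else if i = n then b else u0 with hy
  have hu0 : u0 ∈ Set.Icc u0 u1 := ⟨le_refl _, hu.le⟩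
  have hymem : ∀ i ≤ n, y i ∈ Set.Icc u0 u1 := by
    intro i hi
    simp only [hy]
    split_ifs
    · exact ha'
    · exact hb'
    · exact hu0
  have hy0 : y 0 = a := by simp [hy]
  have hyn : y n = b := by
    simp only [hy]
    have : n ≠ 0 := by omega
    simp [this]
  have hmin' := hmin y hymem hy0 hyn
  have h1 : ∑ i ∈ Finset.range n, (h (x i) (x (i+1)) - c) ≤
      ∑ i ∈ Finset.range n, (h (y i) (y (i+1)) - c) := by
    rw [Finset.sum_sub_distrib, Finset.sum_sub_distrib]
    exact sub_le_sub_right hmin' _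
  refine h1.trans ?_
  rw [mul_add]
  have hA : h a u0 - c ≤ C * |a - u0| := by
    rw [hc]
    calc h a u0 - h u0 u0 ≤ |h a u0 - h u0 u0| := le_abs_self _
      _ ≤ C * |a - u0| := hlip2 a u0 u0 ha' hu0 hu0
  have hB : h u0 b - c ≤ C * |b - u0| := by
    rw [hc]
    calc h u0 b - h u0 u0 ≤ |h u0 b - h u0 u0| := le_abs_self _
      _ ≤ C * |b - u0| := hlip1 u0 b u0 hu0 hb' hu0
  rcases eq_or_lt_of_le hn with h1n | h2n
  · -- n = 1
    have hn1 : n = 1 := h1n.symm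
    subst hn1
    have hy1 : y 1 = b := hyn
    rw [Finset.sum_range_one, hy0, hy1]
    have hAB : h a b - h u0 b ≤ C * |a - u0| := by
      calc h a b - h u0 b ≤ |h a b - h u0 b| := le_abs_self _
        _ ≤ C * |a - u0| := hlip2 a u0 b ha' hu0 hb'
    linarith
  · -- n ≥ 2
    have hn2 : 2 ≤ n := h2n
    have hbound : ∀ i ∈ Finset.range n, h (y i) (y (i+1)) - c ≤
        (if i = 0 then C * |a - u0| else 0) + (if i = n - 1 then C * |b - u0| else 0) := by
      intro i hi
      rw [Finset.mem_range] at hi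
      rcases eq_or_ne i 0 with rfl | hi0
      · have h10 : (1 : ℕ) ≠ 0 := one_ne_zero
        have h1n' : (1 : ℕ) ≠ n := by omega
        have hn10 : n - 1 ≠ 0 := by omega
        simp only [hy, if_pos rfl, if_neg h10, if_neg h1n', if_neg (by omega : (0:ℕ) ≠ n - 1)]
        simpa using hA
      · rcases eq_or_ne i (n - 1) with rfl | hin1
        · have : n - 1 + 1 = n := by omega
          rw [this]
          simp only [hy, if_neg hi0, if_neg (by omega : n - 1 ≠ n), if_pos rfl, hyn]
          have hnz : n ≠ 0 := by omega
          rw [if_neg hnz]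
          simpa [hi0] using hB
        · have hi1 : i + 1 ≠ 0 := by omega
          have hin : i + 1 ≠ n := by omega
          simp only [hy, if_neg hi0, if_neg (by omega : i ≠ n), if_neg hi1, if_neg hin,
            if_neg hin1]
          rw [hc]
          simp
    have hsum := Finset.sum_le_sum hbound
    refine hsum.trans ?_
    rw [Finset.sum_add_distrib]
    have e1 : ∑ i ∈ Finset.range n, (if i = 0 then C * |a - u0| else 0) = C * |a - u0| := by
      rw [Finset.sum_ite_eq' (Finset.range n) 0 (fun _ => C * |a - u0|)]
      simp [Finset.mem_range]; omega
    have e2 : ∑ i ∈ Finset.range n, (if i = n - 1 then C * |b - u0| else 0) = C * |b - u0| := by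
      rw [Finset.sum_ite_eq' (Finset.range n) (n - 1) (fun _ => C * |b - u0|)]
      simp [Finset.mem_range]; omega
    rw [e1, e2]
end

section
/- Let x⁰ and x¹ be two strictly monotone configurations in X = [u⁰,u¹]^ℤ, with x⁰ increasing and x¹ decreasing, which cross exactly once. Define x⁺_i = max(x⁰_i, x¹_i) and x⁻_i = min(x⁰_i, x¹_i). If h satisfies (h3) (strict submodularity), then I(x⁰) + I(x¹) ≥ I(x⁺) + I(x⁻), where I(y) = Σ_{i∈ℤ}(h(y_i,y_{i+1}) − c), assuming all four sums converge. -/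
/-- Cut-and-paste inequality: for a strictly increasing configuration `x⁰` and a
strictly decreasing configuration `x¹` crossing exactly once, with
`x⁺ = max(x⁰,x¹)` and `x⁻ = min(x⁰,x¹)`, condition (h3) gives
`I(x⁰) + I(x¹) ≥ I(x⁺) + I(x⁻)`. -/
theorem cut_and_paste
    (h : ℝ → ℝ → ℝ)
    (hcont : Continuous fun p : ℝ × ℝ => h p.1 p.2)
    (h3 : ∀ ξ₁ ξ₂ η₁ η₂ : ℝ, ξ₁ < ξ₂ → η₁ < η₂ →
      h ξ₁ η₁ + h ξ₂ η₂ < h ξ₁ η₂ + h ξ₂ η₁)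
    (u0 u1 c : ℝ) (hu : u0 < u1) (hc : c = h u0 u0)
    (x0 x1 : ℤ → ℝ)
    (hx0mem : ∀ i, x0 i ∈ Set.Icc u0 u1) (hx1mem : ∀ i, x1 i ∈ Set.Icc u0 u1)
    (hx0mono : ∀ i : ℤ, x0 i < x0 (i + 1))
    (hx1anti : ∀ i : ℤ, x1 (i + 1) < x1 i)
    (hcross : ∃ i₀ : ℤ, (∀ i ≤ i₀, x0 i ≤ x1 i) ∧ (∀ i : ℤ, i₀ < i → x1 i ≤ x0 i))
    (hs0 : Summable fun i : ℤ => h (x0 i) (x0 (i + 1)) - c)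
    (hs1 : Summable fun i : ℤ => h (x1 i) (x1 (i + 1)) - c)
    (hsp : Summable fun i : ℤ =>
      h (max (x0 i) (x1 i)) (max (x0 (i + 1)) (x1 (i + 1))) - c)
    (hsm : Summable fun i : ℤ =>
      h (min (x0 i) (x1 i)) (min (x0 (i + 1)) (x1 (i + 1))) - c) :
    (∑' i : ℤ, (h (max (x0 i) (x1 i)) (max (x0 (i + 1)) (x1 (i + 1))) - c)) +
      (∑' i : ℤ, (h (min (x0 i) (x1 i)) (min (x0 (i + 1)) (x1 (i + 1))) - c)) ≤
    (∑' i : ℤ, (h (x0 i) (x0 (i + 1)) - c)) +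
      (∑' i : ℤ, (h (x1 i) (x1 (i + 1)) - c)) := by
  obtain ⟨i₀, hle, hgt⟩ := hcross
  have h3' : ∀ ξ₁ ξ₂ η₁ η₂ : ℝ, ξ₁ ≤ ξ₂ → η₁ ≤ η₂ →
      h ξ₁ η₁ + h ξ₂ η₂ ≤ h ξ₁ η₂ + h ξ₂ η₁ := by
    intro ξ₁ ξ₂ η₁ η₂ h1 h2
    rcases h1.eq_or_lt with rfl | h1
    · ring_nf; rfl
    rcases h2.eq_or_lt with rfl | h2
    · ring_nf; rfl
    exact (h3 ξ₁ ξ₂ η₁ η₂ h1 h2).le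
  rw [← Summable.tsum_add hsp hsm, ← Summable.tsum_add hs0 hs1]
  refine Summable.tsum_le_tsum (fun i => ?_) (hsp.add hsm) (hs0.add hs1)
  rcases lt_trichotomy i i₀ with hi | rfl | hi
  · have h1 := hle i hi.le
    have h2 := hle (i + 1) (by omega)
    rw [max_eq_right h1, min_eq_left h1, max_eq_right h2, min_eq_left h2]
    ring_nf; rfl
  · have h1 := hle i le_rfl
    have h2 := hgt (i + 1) (by omega)
    rw [max_eq_right h1, min_eq_left h1, max_eq_left h2, min_eq_right h2]
    have := h3' (x0 i) (x1 i) (x1 (i + 1)) (x0 (i + 1)) h1 h2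
    linarith
  · have h1 := hgt i hi
    have h2 := hgt (i + 1) (by omega)
    rw [max_eq_left h1, min_eq_right h1, max_eq_left h2, min_eq_right h2]
end
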